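/- Let t ≥ 2, let M₁, …, M_t be nonsingular 2×2 integer matrices, and let 𝒮₁, …, 𝒮_{t-1} ⊆ GL(2,ℤ) be regular subsets. Then the set {A ∈ GL(2,ℤ) : there exist A₁ ∈ 𝒮₁, …, A_{t-1} ∈ 𝒮_{t-1} with A₁ M₁ A₂ M₂ ⋯ A_{t-1} M_{t-1} A = M_t} is a regular subset of GL(2,ℤ). -/

import Mathlib

/-- 2×2 integer matrices. -/
abbrev M2 := Matrix (Fin 2) (Fin 2) ℤ

/-- A matrix belongs to GL(2,ℤ), i.e. has determinant ±1. -/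
def IsGL (A : M2) : Prop := A.det = 1 ∨ A.det = -1

/-- The four-letter alphabet Σ = {X, N, S, R}. -/
inductive Alph : Type | X | N | S | R
deriving DecidableEq

instance instFintypeAlph : Fintype Alph where
  elems := {Alph.X, Alph.N, Alph.S, Alph.R}
  complete := by intro x; cases x <;> simp

/-- The matrices assigned to letters of Σ. -/
def phiLetter : Alph → M2
  | Alph.X => !![-1, 0; 0, -1]
  | Alph.N => !![1, 0; 0, -1]
  | Alph.S => !![0, -1; 1, 0]
  | Alph.R => !![0, -1; 1, 1]

/-- The monoid homomorphism φ : Σ* → GL(2,ℤ) (valued in matrices). -/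
def phi (w : List Alph) : M2 := (w.map phiLetter).prod

/-- A word over Σ is canonical: no subword SS or RRR, the letter N occurs only in
the first position, and X occurs only in the first position or immediately after N. -/
def Canonical (w : List Alph) : Prop :=
  ¬ [Alph.S, Alph.S] <:+: w ∧
  ¬ [Alph.R, Alph.R, Alph.R] <:+: w ∧
  (∀ i : Fin w.length, w.get i = Alph.N → (i : ℕ) = 0) ∧
  (∀ i : Fin w.length, w.get i = Alph.X →
      (i : ℕ) = 0 ∨ ((i : ℕ) = 1 ∧ w.get ⟨0, Nat.lt_of_le_of_lt (Nat.zero_le _) i.isLt⟩ = Alph.N))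

/-- A subset of GL(2,ℤ) is regular if it is the image under φ of a regular language. -/
def RegularSubset (S : Set M2) : Prop :=
  ∃ L : Language Alph, L.IsRegular ∧ phi '' L = S

/-! ### Section 1: basic lemmas about `phi` and `IsGL` -/

@[simp] lemma phi_nil : phi [] = 1 := rfl

@[simp] lemma phi_cons (a : Alph) (w : List Alph) : phi (a :: w) = phiLetter a * phi w := by
  simp [phi]

lemma phi_append (u v : List Alph) : phi (u ++ v) = phi u * phi v := by
  simp [phi]

lemma isGL_one : IsGL 1 := Or.inl (by simp)

lemma IsGL.mul {A B : M2} (hA : IsGL A) (hB : IsGL B) : IsGL (A * B) := by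
  rcases hA with h1 | h1 <;> rcases hB with h2 | h2 <;>
    simp [IsGL, Matrix.det_mul, h1, h2]

lemma isGL_phiLetter (a : Alph) : IsGL (phiLetter a) := by
  cases a <;> simp [IsGL, phiLetter, Matrix.det_fin_two_of]

lemma isGL_phi (w : List Alph) : IsGL (phi w) := by
  induction w with
  | nil => exact isGL_one
  | cons a t ih => rw [phi_cons]; exact (isGL_phiLetter a).mul ih

lemma IsGL.isUnit_det {A : M2} (h : IsGL A) : IsUnit A.det := by
  rcases h with h | h <;> rw [h] <;> simp

lemma IsGL.mul_inv {A : M2} (h : IsGL A) : A * A⁻¹ = 1 := Matrix.mul_nonsing_inv A h.isUnit_det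

lemma IsGL.inv_mul {A : M2} (h : IsGL A) : A⁻¹ * A = 1 := Matrix.nonsing_inv_mul A h.isUnit_det

lemma IsGL.inv {A : M2} (h : IsGL A) : IsGL A⁻¹ := by
  have := Matrix.det_nonsing_inv_mul_det (A := A) h.isUnit_det
  rcases h with h | h <;> rw [h] at this
  · exact Or.inl (by linarith)
  · exact Or.inr (by linarith)

lemma smul_cancel {d : ℤ} (hd : d ≠ 0) {X Y : M2} (h : d • X = d • Y) : X = Y := by
  ext i j
  have := congrFun (congrFun h i) j
  simp only [Matrix.smul_apply, smul_eq_mul] at this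
  exact mul_left_cancel₀ hd this

/-! ### Section 2: surjectivity of phi onto GL(2,Z) -/

def InPhi (A : M2) : Prop := ∃ w : List Alph, phi w = A

lemma InPhi.mul {A B : M2} (hA : InPhi A) (hB : InPhi B) : InPhi (A * B) := by
  obtain ⟨u, rfl⟩ := hA; obtain ⟨v, rfl⟩ := hB
  exact ⟨u ++ v, phi_append u v⟩

lemma inPhi_one : InPhi 1 := ⟨[], rfl⟩

lemma inPhi_X : InPhi !![-1, 0; 0, -1] := ⟨[Alph.X], by simp [phi, phiLetter]⟩
lemma inPhi_N : InPhi !![1, 0; 0, -1] := ⟨[Alph.N], by simp [phi, phiLetter]⟩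
lemma inPhi_S : InPhi !![0, -1; 1, 0] := ⟨[Alph.S], by simp [phi, phiLetter]⟩

lemma inPhi_T : InPhi !![1, 1; 0, 1] := by
  refine ⟨[Alph.S, Alph.S, Alph.S, Alph.R], ?_⟩
  simp [phi, phiLetter]

lemma inPhi_Tinv : InPhi !![1, -1; 0, 1] := by
  refine ⟨[Alph.R, Alph.R, Alph.R, Alph.R, Alph.R, Alph.S], ?_⟩
  simp [phi, phiLetter]

lemma inPhi_upper (b : ℤ) : InPhi !![1, b; 0, 1] := by
  obtain ⟨n, rfl | rfl⟩ := b.eq_nat_or_neg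
  · induction n with
    | zero => simpa [Matrix.one_fin_two] using inPhi_one
    | succ n ih =>
      have key : !![1, (n:ℤ); 0, 1] * !![1, 1; 0, 1] = !![1, ((n+1 : ℕ) : ℤ); 0, 1] := by
        norm_num [Matrix.mul_fin_two]
        ring
      have := ih.mul inPhi_T
      rwa [key] at this
  · induction n with
    | zero => simpa [Matrix.one_fin_two] using inPhi_one
    | succ n ih =>
      have key : !![1, -(n:ℤ); 0, 1] * !![1, -1; 0, 1] = !![1, -((n+1 : ℕ) : ℤ); 0, 1] := by
        norm_num [Matrix.mul_fin_two]
      have := ih.mul inPhi_Tinv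
      rwa [key] at this

lemma inPhi_upperN (b : ℤ) : InPhi !![1, b; 0, -1] := by
  have key : !![1, -b; 0, 1] * !![1, 0; 0, -1] = !![1, b; 0, -1] := by
    norm_num [Matrix.mul_fin_two]
  have := (inPhi_upper (-b)).mul inPhi_N
  rwa [key] at this

lemma inPhi_upperXN (b : ℤ) : InPhi !![-1, b; 0, 1] := by
  have key : (!![-1, 0; 0, -1] * !![1, 0; 0, -1]) * !![1, -b; 0, 1] = !![-1, b; 0, 1] := by
    norm_num [Matrix.mul_fin_two]
  have := (inPhi_X.mul inPhi_N).mul (inPhi_upper (-b))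
  rwa [key] at this

lemma inPhi_upperX (b : ℤ) : InPhi !![-1, b; 0, -1] := by
  have key : !![-1, 0; 0, -1] * !![1, -b; 0, 1] = !![-1, b; 0, -1] := by
    norm_num [Matrix.mul_fin_two]
  have := inPhi_X.mul (inPhi_upper (-b))
  rwa [key] at this

lemma kill_upper (a b d : ℤ) (h : a * d = 1 ∨ a * d = -1) :
    ∃ B : M2, InPhi B ∧ B * !![a, b; 0, d] = 1 := by
  have ha : IsUnit a := by
    rcases h with h | h
    · exact IsUnit.of_mul_eq_one d h
    · exact IsUnit.of_mul_eq_one (-d) (by linarith)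
  have hd : IsUnit d := by
    rcases h with h | h
    · exact IsUnit.of_mul_eq_one a (by linarith)
    · exact IsUnit.of_mul_eq_one (-a) (by linarith)
  rw [Int.isUnit_iff] at ha hd
  rcases ha with rfl | rfl <;> rcases hd with rfl | rfl
  · exact ⟨_, inPhi_upper (-b), by rw [Matrix.one_fin_two]; norm_num [Matrix.mul_fin_two]⟩
  · exact ⟨_, inPhi_upperN b, by rw [Matrix.one_fin_two]; norm_num [Matrix.mul_fin_two]⟩
  · exact ⟨_, inPhi_upperXN b, by rw [Matrix.one_fin_two]; norm_num [Matrix.mul_fin_two]⟩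
  · exact ⟨_, inPhi_upperX (-b), by rw [Matrix.one_fin_two]; norm_num [Matrix.mul_fin_two]⟩

lemma emod_abs_facts {a c : ℤ} (hc : c ≠ 0) : 0 ≤ a % c ∧ (a % c).natAbs < c.natAbs := by
  constructor
  · exact Int.emod_nonneg a hc
  · have h1 : a % c < |c| := by
      rcases lt_or_gt_of_ne hc with h | h
      · rw [← Int.emod_neg]; have := Int.emod_lt_of_pos a (b := -c) (by linarith)
        rwa [abs_of_neg h]
      · have := Int.emod_lt_of_pos a h; rwa [abs_of_pos h]
    have h0 : 0 ≤ a % c := Int.emod_nonneg a hc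
    rw [Int.abs_eq_natAbs] at h1
    omega

lemma kill_left : ∀ (n : ℕ) (A : M2), IsGL A → (A 1 0).natAbs = n →
    ∃ B : M2, InPhi B ∧ B * A = 1 := by
  intro n
  induction n using Nat.strong_induction_on with
  | _ n IH =>
    intro A hA hn
    by_cases hc : A 1 0 = 0
    · have hdet : A 0 0 * A 1 1 = 1 ∨ A 0 0 * A 1 1 = -1 := by
        rcases hA with h | h <;> rw [Matrix.det_fin_two, hc] at h <;>
          [left; right] <;> linarith
      obtain ⟨B, hB, hBA⟩ := kill_upper (A 0 0) (A 0 1) (A 1 1) hdet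
      refine ⟨B, hB, ?_⟩
      rwa [A.eta_fin_two, hc]
    · -- Euclidean step
      set c := A 1 0 with hcdef
      set q := A 0 0 / c with hq
      set W : M2 := !![1, -q; 0, 1] with hW
      set Smat : M2 := !![0, -1; 1, 0] with hS
      have key : (Smat * W * A) 1 0 = A 0 0 % c := by
        simp [hW, hS, Matrix.mul_apply, Fin.sum_univ_two, Int.emod_def, hq]
        ring
      have hGL2 : IsGL (Smat * W * A) := by
        have h1 : IsGL Smat := Or.inl (by norm_num [hS, Matrix.det_fin_two_of])
        have h2 : IsGL W := Or.inl (by norm_num [hW, Matrix.det_fin_two_of])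
        exact (h1.mul h2).mul hA
      have hlt : ((Smat * W * A) 1 0).natAbs < n := by
        rw [key, ← hn]
        exact (emod_abs_facts hc).2
      obtain ⟨B₂, hB₂, hB₂eq⟩ := IH _ hlt (Smat * W * A) hGL2 rfl
      refine ⟨B₂ * Smat * W, (hB₂.mul inPhi_S).mul (inPhi_upper (-q)), ?_⟩
      rw [show B₂ * Smat * W * A = B₂ * (Smat * W * A) by noncomm_ring]
      exact hB₂eq

def invLetter : Alph → List Alph
  | Alph.X => [Alph.X]
  | Alph.N => [Alph.N]
  | Alph.S => [Alph.S, Alph.S, Alph.S]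
  | Alph.R => [Alph.R, Alph.R, Alph.R, Alph.R, Alph.R]

def invWord (w : List Alph) : List Alph := (w.reverse.map invLetter).flatten

lemma phi_invLetter (a : Alph) : phi (invLetter a) * phiLetter a = 1 := by
  cases a <;> rw [Matrix.one_fin_two] <;> simp [invLetter, phi, phiLetter] <;> norm_num [Matrix.mul_fin_two]

lemma invWord_cons (a : Alph) (t : List Alph) :
    invWord (a :: t) = invWord t ++ invLetter a := by
  simp [invWord]

lemma phi_invWord (w : List Alph) : phi (invWord w) * phi w = 1 := by
  induction w with
  | nil => simp [invWord]
  | cons a t ih =>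
    rw [invWord_cons, phi_append, phi_cons]
    calc phi (invWord t) * phi (invLetter a) * (phiLetter a * phi t)
        = phi (invWord t) * (phi (invLetter a) * phiLetter a) * phi t := by noncomm_ring
      _ = 1 := by rw [phi_invLetter]; simpa using ih

lemma phi_surj {A : M2} (hA : IsGL A) : ∃ w, phi w = A := by
  obtain ⟨B, ⟨wB, rfl⟩, hBA⟩ := kill_left (A 1 0).natAbs A hA rfl
  refine ⟨invWord wB, ?_⟩
  have := congrArg (fun X => phi (invWord wB) * X) hBA
  simpa [← Matrix.mul_assoc, phi_invWord wB] using this.symm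

lemma phi_surj' {A : M2} (hA : IsGL A) : ∃ w, w ≠ [] ∧ phi w = A := by
  obtain ⟨w, rfl⟩ := phi_surj hA
  refine ⟨w ++ [Alph.X, Alph.X], by simp, ?_⟩
  rw [phi_append]
  have : phi [Alph.X, Alph.X] = 1 := by
    rw [Matrix.one_fin_two]; simp [phi, phiLetter]
  rw [this, mul_one]

/-! ### Section 3: path automata with GL-labelled edges have regular path-product sets -/

inductive MPath {Q : Type} (E : Q → Option Alph → Q → Prop) (lbl : Q → Option Alph → Q → M2)
    (q₀ : Q) : Q → M2 → Prop
  | nil : MPath E lbl q₀ q₀ 1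
  | cons {q P t q'} : MPath E lbl q₀ q P → E q t q' → MPath E lbl q₀ q' (P * lbl q t q')

lemma mpath_isGL {Q : Type} {E : Q → Option Alph → Q → Prop} {lbl : Q → Option Alph → Q → M2}
    (hlbl : ∀ q t q', E q t q' → IsGL (lbl q t q')) {q₀ x : Q} {P : M2}
    (h : MPath E lbl q₀ x P) : IsGL P := by
  induction h with
  | nil => exact isGL_one
  | cons hp he ih => exact ih.mul (hlbl _ _ _ he)

inductive PW {Q : Type} (E : Q → Option Alph → Q → Prop) (wrd : Q → Option Alph → Q → List Alph)
    (q₀ : Q) : Q → List Alph → Prop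
  | nil : PW E wrd q₀ q₀ []
  | cons {q u t q'} : PW E wrd q₀ q u → E q t q' → PW E wrd q₀ q' (u ++ wrd q t q')

theorem mpath_regular {Q : Type} [Fintype Q] (E : Q → Option Alph → Q → Prop)
    (lbl : Q → Option Alph → Q → M2)
    (hlbl : ∀ q t q', E q t q' → IsGL (lbl q t q')) (q₀ qf : Q) :
    RegularSubset {A | MPath E lbl q₀ qf A} := by
  classical
  have hw : ∀ q t q', ∃ w : List Alph, (E q t q' → phi w = lbl q t q') ∧ w ≠ [] := by
    intro q t q'
    by_cases h : E q t q'
    · obtain ⟨w, hne, hww⟩ := phi_surj' (hlbl q t q' h)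
      exact ⟨w, fun _ => hww, hne⟩
    · exact ⟨[Alph.X, Alph.X], fun h' => absurd h' h, by simp⟩
  choose wrd hwrd hwne using hw
  have fwd : ∀ (x : Q) (u : List Alph), PW E wrd q₀ x u → MPath E lbl q₀ x (phi u) := by
    intro x u hu
    induction hu with
    | nil => simpa using MPath.nil
    | @cons q u t q' hPW hE IH =>
      rw [phi_append, hwrd _ _ _ hE]
      exact MPath.cons IH hE
  have bwd : ∀ (x : Q) (P : M2), MPath E lbl q₀ x P → ∃ u, PW E wrd q₀ x u ∧ phi u = P := by
    intro x P hP
    induction hP with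
    | nil => exact ⟨[], PW.nil, rfl⟩
    | @cons q P t q' hP hE IH =>
      obtain ⟨u, hu, rfl⟩ := IH
      exact ⟨u ++ wrd q t q', PW.cons hu hE, by rw [phi_append, hwrd _ _ _ hE]⟩
  -- the finite set of all suffixes of all edge words
  set SUF : Finset (List Alph) :=
    Finset.univ.biUnion (fun e : Q × Option Alph × Q => ((wrd e.1 e.2.1 e.2.2).tails).toFinset)
    with hSUFdef
  have hSUF : ∀ q t q' l, l <:+ wrd q t q' → l ∈ SUF := by
    intro q t q' l hl
    rw [hSUFdef]
    exact Finset.mem_biUnion.2 ⟨(q, t, q'), Finset.mem_univ _, by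
      simpa [List.mem_tails] using hl⟩
  have hSUFclosed : ∀ a l, (a :: l) ∈ SUF → l ∈ SUF := by
    intro a l hal
    rw [hSUFdef] at hal ⊢
    obtain ⟨e, -, he⟩ := Finset.mem_biUnion.1 hal
    refine Finset.mem_biUnion.2 ⟨e, Finset.mem_univ _, ?_⟩
    simp only [List.mem_toFinset, List.mem_tails] at he ⊢
    exact (List.suffix_cons a l).trans he
  have hnilSUF : ([] : List Alph) ∈ SUF :=
    hSUF q₀ none q₀ [] (List.nil_suffix)
  -- the NFA
  set τ := Q × {l : List Alph // l ∈ SUF} with hτ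
  set nfa : NFA Alph τ :=
    { step := fun p a => {p' | (p.2.val = [] ∧ ∃ t, E p.1 t p'.1 ∧ wrd p.1 t p'.1 = a :: p'.2.val)
                             ∨ (p'.1 = p.1 ∧ p.2.val = a :: p'.2.val)}
      start := {(q₀, ⟨[], hnilSUF⟩)}
      accept := {(qf, ⟨[], hnilSUF⟩)} } with hnfa
  -- soundness of the NFA w.r.t. PW
  have sound : ∀ (u : List Alph) (p : τ), p ∈ nfa.evalFrom nfa.start u →
      PW E wrd q₀ p.1 (u ++ p.2.val) := by
    intro u
    induction u using List.reverseRecOn with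
    | nil =>
      intro p hp
      simp only [NFA.evalFrom_nil, hnfa] at hp
      rw [Set.mem_singleton_iff] at hp
      subst hp
      exact PW.nil
    | append_singleton u a IH =>
      intro p hp
      rw [NFA.evalFrom_append, NFA.evalFrom_singleton, NFA.mem_stepSet] at hp
      obtain ⟨p₁, hp₁, hstep⟩ := hp
      have hPW := IH p₁ hp₁
      rcases hstep with ⟨hnil, t, hE, hwrdeq⟩ | ⟨hq, hcons⟩
      · have := PW.cons hPW hE
        rw [hnil, List.append_nil] at hPW
        have := PW.cons hPW hE
        rwa [hwrdeq, show u ++ (a :: p.2.val) = (u ++ [a]) ++ p.2.val by simp] at this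
      · rw [hcons, show u ++ (a :: p.2.val) = (u ++ [a]) ++ p.2.val by simp] at hPW
        rw [hq]
        exact hPW
  -- evalFrom is monotone
  have evalMono : ∀ (u : List Alph) (S S' : Set τ), S ⊆ S' →
      nfa.evalFrom S u ⊆ nfa.evalFrom S' u := by
    intro u
    induction u with
    | nil => intro S S' h; simpa using h
    | cons a u IH =>
      intro S S' h
      simp only [NFA.evalFrom, List.foldl_cons]
      exact IH _ _ (fun x hx => by
        rw [NFA.mem_stepSet] at hx ⊢
        obtain ⟨s, hs, hx⟩ := hx
        exact ⟨s, h hs, hx⟩)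
  -- consuming the committed word
  have consume : ∀ (q : Q) (l : List Alph) (hl : l ∈ SUF),
      (⟨q, ⟨[], hnilSUF⟩⟩ : τ) ∈ nfa.evalFrom {(⟨q, ⟨l, hl⟩⟩ : τ)} l := by
    intro q l
    induction l with
    | nil => intro hl; simp [NFA.evalFrom]
    | cons a l IH =>
      intro hl
      have hl' : l ∈ SUF := hSUFclosed a l hl
      have hstep : (⟨q, ⟨l, hl'⟩⟩ : τ) ∈ nfa.stepSet {(⟨q, ⟨a :: l, hl⟩⟩ : τ)} a := by
        rw [NFA.mem_stepSet]
        exact ⟨_, rfl, Or.inr ⟨rfl, rfl⟩⟩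
      exact evalMono l _ _ (Set.singleton_subset_iff.2 hstep) (IH hl')
  -- completeness
  have compl : ∀ (q : Q) (u : List Alph), PW E wrd q₀ q u →
      (⟨q, ⟨[], hnilSUF⟩⟩ : τ) ∈ nfa.evalFrom nfa.start u := by
    intro q u hPW
    induction hPW with
    | nil => simp [NFA.evalFrom, hnfa]
    | @cons q u t q' hPW hE IH =>
      have happ : nfa.evalFrom nfa.start (u ++ wrd q t q') =
          nfa.evalFrom (nfa.evalFrom nfa.start u) (wrd q t q') := by
        simp [NFA.evalFrom, List.foldl_append]
      rw [happ]
      obtain ⟨a, rest, hrest⟩ : ∃ a rest, wrd q t q' = a :: rest := by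
        rcases hw' : wrd q t q' with _ | ⟨a, rest⟩
        · exact absurd hw' (hwne q t q')
        · exact ⟨a, rest, rfl⟩
      have hrestSUF : rest ∈ SUF := hSUF q t q' rest ⟨[a], by rw [hrest]; rfl⟩
      have hstep1 : (⟨q', ⟨rest, hrestSUF⟩⟩ : τ) ∈ nfa.stepSet {(⟨q, ⟨[], hnilSUF⟩⟩ : τ)} a := by
        rw [NFA.mem_stepSet]
        exact ⟨_, rfl, Or.inl ⟨rfl, t, hE, by rw [hrest]⟩⟩
      have : (⟨q', ⟨[], hnilSUF⟩⟩ : τ) ∈ nfa.evalFrom {(⟨q, ⟨[], hnilSUF⟩⟩ : τ)} (wrd q t q') := by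
        rw [hrest]
        exact evalMono rest _ _ (Set.singleton_subset_iff.2 hstep1) (consume q' rest hrestSUF)
      exact evalMono _ _ _ (fun x hx => by rw [Set.mem_singleton_iff] at hx; subst hx; exact IH) this
  -- PW ↔ accepts
  have haccepts : nfa.accepts = {u | PW E wrd q₀ qf u} := by
    ext u
    rw [NFA.mem_accepts]
    constructor
    · rintro ⟨p, hp, hpe⟩
      rw [hnfa] at hp
      rw [Set.mem_singleton_iff] at hp
      subst hp
      show PW E wrd q₀ qf u
      simpa using sound u _ hpe
    · intro hu
      exact ⟨_, rfl, compl qf u hu⟩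
  -- phi image
  refine ⟨nfa.accepts, ⟨Set τ, inferInstance, nfa.toDFA, nfa.toDFA_correct⟩, ?_⟩
  rw [haccepts]
  ext A
  constructor
  · rintro ⟨u, hu, rfl⟩
    exact fwd qf u hu
  · intro hA
    simp only [Set.mem_setOf_eq] at hA
    obtain ⟨u, hu, hphi⟩ := bwd qf A hA
    exact ⟨u, hu, hphi⟩

/-! ### Section 4: algebraic characterization of the solution equation -/

lemma det_smul_iff {p : M2} (hp : p.det ≠ 0) (X Y : M2) :
    p * X = Y ↔ p.det • X = p.adjugate * Y := by
  constructor
  · rintro rfl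
    rw [← Matrix.mul_assoc, Matrix.adjugate_mul, Matrix.smul_mul, Matrix.one_mul]
  · intro h
    have h2 : p.det • (p * X) = p.det • Y := by
      calc p.det • (p * X) = p * (p.det • X) := by rw [Matrix.mul_smul]
        _ = p * (p.adjugate * Y) := by rw [h]
        _ = (p * p.adjugate) * Y := by rw [Matrix.mul_assoc]
        _ = p.det • Y := by rw [Matrix.mul_adjugate, Matrix.smul_mul, Matrix.one_mul]
    exact smul_cancel hp h2

lemma gl_shift_iff {g : M2} (hg : IsGL g) (X Y : M2) : g * X = Y ↔ X = g⁻¹ * Y := by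
  constructor
  · rintro rfl
    rw [← Matrix.mul_assoc, hg.inv_mul, Matrix.one_mul]
  · rintro rfl
    rw [← Matrix.mul_assoc, hg.mul_inv, Matrix.one_mul]

lemma key_alg : ∀ (l : List (M2 × M2)) (A Mt : M2),
    (∀ p ∈ l, IsGL p.1 ∧ p.2.det ≠ 0) →
    (((l.map fun p => p.1 * p.2).prod * A = Mt) ↔
      ((l.map fun p => p.2.adjugate * p.1⁻¹).reverse.prod * Mt =
        (l.map fun p => p.2.det).prod • A)) := by
  intro l
  induction l with
  | nil => intro A Mt _; simp [eq_comm]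
  | cons p l IH =>
    intro A Mt hl
    have hp1 : IsGL p.1 := (hl p List.mem_cons_self).1
    have hp2 : p.2.det ≠ 0 := (hl p List.mem_cons_self).2
    have hl' : ∀ q ∈ l, IsGL q.1 ∧ q.2.det ≠ 0 := fun q hq => hl q (List.mem_cons_of_mem p hq)
    simp only [List.map_cons, List.prod_cons, List.reverse_cons, List.prod_append,
      List.prod_singleton, List.prod_nil, mul_one]
    rw [Matrix.mul_assoc, Matrix.mul_assoc]
    rw [gl_shift_iff hp1]
    rw [det_smul_iff hp2]
    have hcomm : p.2.adjugate * (p.1⁻¹ * Mt) = (p.2.adjugate * p.1⁻¹) * Mt := by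
      rw [Matrix.mul_assoc]
    rw [hcomm, ← Matrix.mul_smul]
    rw [IH (p.2.det • A) ((p.2.adjugate * p.1⁻¹) * Mt) hl']
    have e1 : (l.map fun p => p.2.adjugate * p.1⁻¹).reverse.prod * (p.2.adjugate * p.1⁻¹ * Mt) =
        (l.map fun p => p.2.adjugate * p.1⁻¹).reverse.prod * (p.2.adjugate * p.1⁻¹) * Mt := by
      simp only [Matrix.mul_assoc]
    have e2 : (l.map fun p => p.2.det).prod • p.2.det • A =
        (p.2.det * (l.map fun p => p.2.det).prod) • A := by
      rw [smul_smul, mul_comm]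
    rw [e1, e2]

/-! ### Section 5: the orbit lemma -/

lemma orbit_lemma (m : ℕ) (d : ℤ) (hd0 : d ≠ 0) (hdm : d ∣ (m : ℤ)) {Z Z' : M2}
    (h1 : Z.det = d ∨ Z.det = -d) (h2 : Z'.det = d ∨ Z'.det = -d)
    (hr : Z.map (Int.cast : ℤ → ZMod m) = Z'.map (Int.cast : ℤ → ZMod m)) :
    ∃ U : M2, IsGL U ∧ U * Z = Z' := by
  have hZdet : Z.det ≠ 0 := by rcases h1 with h | h <;> rw [h] <;> simpa using hd0
  have hdiff : ∀ i j, (m : ℤ) ∣ (Z' - Z) i j := by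
    intro i j
    have := congrFun (congrFun hr i) j
    simp only [Matrix.map_apply] at this
    have : ((Z' - Z) i j : ZMod m) = 0 := by
      simp [Matrix.sub_apply, ← this]
    exact (ZMod.intCast_zmod_eq_zero_iff_dvd _ m).1 this
  have hdvd : ∀ i j, Z.det ∣ (Z' * Z.adjugate) i j := by
    intro i j
    have hsplit : (Z' - Z) * Z.adjugate + Z.det • 1 = Z' * Z.adjugate := by
      rw [Matrix.sub_mul, Matrix.mul_adjugate]
      abel
    rw [← hsplit]
    refine dvd_add ?_ ?_
    · have hm : (m : ℤ) ∣ ((Z' - Z) * Z.adjugate) i j := by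
        rw [Matrix.mul_apply]
        refine Finset.dvd_sum ?_
        intro x _
        exact Dvd.dvd.mul_right (hdiff i x) _
      have hdm' : Z.det ∣ (m : ℤ) := by
        rcases h1 with h | h
        · rw [h]; exact hdm
        · rw [h]; exact (neg_dvd).2 hdm
      exact hdm'.trans hm
    · simp only [Matrix.smul_apply, Matrix.one_apply, smul_eq_mul]
      exact Dvd.dvd.mul_right dvd_rfl _
  set U : M2 := Matrix.of fun i j => (Z' * Z.adjugate) i j / Z.det with hU
  have hUscale : Z.det • U = Z' * Z.adjugate := by
    ext i j
    simp only [hU, Matrix.smul_apply, Matrix.of_apply, smul_eq_mul]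
    exact Int.mul_ediv_cancel' (hdvd i j)
  have hUZ : U * Z = Z' := by
    have h3 : Z.det • (U * Z) = Z.det • Z' := by
      rw [← Matrix.smul_mul, hUscale, Matrix.mul_assoc, Matrix.adjugate_mul,
        Matrix.mul_smul, Matrix.mul_one]
    exact smul_cancel hZdet h3
  have hUdet : IsGL U := by
    have hdet1 : (Z.det • U).det = Z.det ^ 2 * U.det := by
      rw [Matrix.det_smul]; norm_num
    have hdet2 : (Z' * Z.adjugate).det = Z'.det * Z.det := by
      rw [Matrix.det_mul, Matrix.det_adjugate]
      norm_num
    have := hUscale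
    have heq : Z.det ^ 2 * U.det = Z'.det * Z.det := by
      rw [← hdet1, ← hdet2, hUscale]
    rcases h1 with ha | ha <;> rcases h2 with hb | hb <;> rw [ha, hb] at heq
    · exact Or.inl (mul_left_cancel₀ (pow_ne_zero 2 hd0) (by rw [heq]; ring))
    · exact Or.inr (mul_left_cancel₀ (pow_ne_zero 2 hd0) (by rw [heq]; ring))
    · exact Or.inr (mul_left_cancel₀ (pow_ne_zero 2 hd0)
        (by rw [show d^2 * U.det = (-d)^2 * U.det by ring, heq]; ring))
    · exact Or.inl (mul_left_cancel₀ (pow_ne_zero 2 hd0)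
        (by rw [show d^2 * U.det = (-d)^2 * U.det by ring, heq]; ring))
  exact ⟨U, hUdet, hUZ⟩

/-! ### Section 6: the main automaton construction -/

structure Ctx where
  k : ℕ
  hk : 1 ≤ k
  σ : Fin k → Type
  ft : ∀ i, Fintype (σ i)
  D : ∀ i, DFA Alph (σ i)
  M : Fin k → M2
  Mt : M2
  hM : ∀ i, (M i).det ≠ 0
  hMt : Mt.det ≠ 0

namespace Ctx

open Classical

variable (C : Ctx)

instance (i : Fin C.k) : Fintype (C.σ i) := C.ft i

/-- Partial determinant products. -/
def cHat (n : ℕ) : ℤ := ((List.ofFn fun j : Fin C.k => (C.M j).det).drop n).prod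

def c : ℤ := C.cHat 0

lemma cHat_k : C.cHat C.k = 1 := by
  unfold cHat
  rw [List.drop_eq_nil_of_le (by simp)]
  rfl

lemma cHat_succ (n : ℕ) (h : n < C.k) :
    C.cHat n = (C.M ⟨n, h⟩).det * C.cHat (n + 1) := by
  unfold cHat
  rw [List.drop_eq_getElem_cons (by simpa using h)]
  rw [List.prod_cons]
  congr 1
  simp only [List.getElem_ofFn]

lemma cHat_ne (n : ℕ) : C.cHat n ≠ 0 := by
  apply List.prod_ne_zero
  intro h0
  have := List.mem_of_mem_drop h0
  rw [List.mem_ofFn] at this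
  obtain ⟨j, hj⟩ := this
  exact C.hM j hj

lemma c_ne : C.c ≠ 0 := C.cHat_ne 0

lemma cHat_dvd_c (n : ℕ) : C.cHat n ∣ C.c := by
  refine Dvd.intro_left ((List.ofFn fun j : Fin C.k => (C.M j).det).take n).prod ?_
  unfold cHat c
  rw [List.prod_take_mul_prod_drop]
  simp only [cHat, List.drop_zero]

/-- The modulus. -/
def m : ℕ := ((C.c * C.Mt.det) ^ 2).natAbs

lemma m_coe : (C.m : ℤ) = (C.c * C.Mt.det) ^ 2 := by
  unfold m
  exact Int.natAbs_of_nonneg (sq_nonneg _)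

lemma m_ne : C.m ≠ 0 := by
  intro h
  have : ((C.m : ℤ)) = 0 := by exact_mod_cast h
  rw [C.m_coe] at this
  exact (pow_ne_zero 2 (mul_ne_zero C.c_ne C.hMt)) this

instance : NeZero C.m := ⟨C.m_ne⟩

lemma cHat_dvd_m (n : ℕ) : C.cHat n ∣ (C.m : ℤ) := by
  rw [C.m_coe]
  exact (C.cHat_dvd_c n).trans ⟨C.c * C.Mt.det ^ 2, by ring⟩

lemma cdMt_dvd_m : C.c * C.Mt.det ∣ (C.m : ℤ) := by
  rw [C.m_coe]
  exact ⟨C.c * C.Mt.det, by ring⟩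

lemma cdMt_ne : C.c * C.Mt.det ≠ 0 := mul_ne_zero C.c_ne C.hMt

/-- Residue matrices. -/
abbrev R2 := Matrix (Fin 2) (Fin 2) (ZMod C.m)

/-- Reduction mod m as a ring hom. -/
def redHom : M2 →+* C.R2 := (Int.castRingHom (ZMod C.m)).mapMatrix

def red (Z : M2) : C.R2 := C.redHom Z

lemma red_eq_map (Z : M2) : C.red Z = Z.map (Int.cast : ℤ → ZMod C.m) := rfl

lemma red_mul (Z W : M2) : C.red (Z * W) = C.red Z * C.red W := map_mul C.redHom Z W

/-- The chunk list and partial products. -/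
noncomputable def chunks (ws : Fin C.k → List Alph) : List M2 :=
  List.ofFn fun j : Fin C.k => (C.M j).adjugate * (phi (ws j))⁻¹

noncomputable def TPP (ws : Fin C.k → List Alph) (n : ℕ) : M2 := ((C.chunks ws).drop n).reverse.prod

noncomputable def BIG (ws : Fin C.k → List Alph) : M2 := C.TPP ws 0 * C.Mt

lemma TPP_k (ws : Fin C.k → List Alph) : C.TPP ws C.k = 1 := by
  unfold TPP
  rw [List.drop_eq_nil_of_le (by simp [chunks])]
  rfl

lemma TPP_succ (ws : Fin C.k → List Alph) (n : ℕ) (h : n < C.k) :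
    C.TPP ws n = C.TPP ws (n + 1) * ((C.M ⟨n, h⟩).adjugate * (phi (ws ⟨n, h⟩))⁻¹) := by
  unfold TPP
  rw [List.drop_eq_getElem_cons (by simpa [chunks] using h), List.reverse_cons,
    List.prod_append, List.prod_singleton]
  congr 1
  simp [chunks]

lemma TPP_congr (ws ws' : Fin C.k → List Alph) (n : ℕ)
    (h : ∀ j : Fin C.k, n ≤ (j : ℕ) → ws j = ws' j) : C.TPP ws n = C.TPP ws' n := by
  unfold TPP
  congr 1
  congr 1
  apply List.ext_getElem
  · simp [chunks]
  · intro i h1 h2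
    simp only [chunks, List.getElem_drop, List.getElem_ofFn]
    congr 2
    exact congrArg phi (h _ (by simp))

/-- The state space of the big automaton. -/
abbrev Q := (Unit ⊕ Unit) ⊕ ((Fin C.k × (∀ j, C.σ j) × C.R2) ⊕ C.R2)

variable {C}

def qInit : C.Q := Sum.inl (Sum.inl ())
def qHalt : C.Q := Sum.inl (Sum.inr ())
def qMid (i : Fin C.k) (f : ∀ j, C.σ j) (r : C.R2) : C.Q := Sum.inr (Sum.inl (i, f, r))
def qDone (r : C.R2) : C.Q := Sum.inr (Sum.inr r)

variable (C)

/-- Chosen representative of all integer matrices with determinant `±d` and residue `r`. -/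
noncomputable def Erep (d : ℤ) (r : C.R2) : M2 :=
  if h : ∃ Z : M2, C.red Z = r ∧ (Z.det = d ∨ Z.det = -d) then h.choose else 1

lemma Erep_spec {d : ℤ} {r : C.R2} (Z : M2) (hZ : C.red Z = r) (hd : Z.det = d ∨ Z.det = -d) :
    C.red (C.Erep d r) = r ∧ ((C.Erep d r).det = d ∨ (C.Erep d r).det = -d) := by
  have h : ∃ Z : M2, C.red Z = r ∧ (Z.det = d ∨ Z.det = -d) := ⟨Z, hZ, hd⟩
  rw [Erep, dif_pos h]
  exact h.choose_spec

/-- Representatives attached to states. -/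
noncomputable def ErepQ : C.Q → M2
  | Sum.inl _ => 1
  | Sum.inr (Sum.inl (i, _, r)) => C.Erep (C.cHat (i : ℕ)) r
  | Sum.inr (Sum.inr r) => C.Erep (C.c * C.Mt.det) r

/-- The matrix multiplied when traversing an edge. -/
noncomputable def gmat : C.Q → Option Alph → C.Q → M2
  | Sum.inl (Sum.inl _), _, Sum.inr (Sum.inl (i, _, _)) => (C.M i).adjugate
  | Sum.inr (Sum.inl _), some a, _ => (phiLetter a)⁻¹
  | Sum.inr (Sum.inl _), none, Sum.inr (Sum.inl (i', _, _)) => (C.M i').adjugate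
  | Sum.inr (Sum.inl _), none, Sum.inr (Sum.inr _) => C.Mt
  | _, _, _ => 1

def scale : C.Q → ℤ
  | Sum.inl (Sum.inr _) => C.c
  | _ => 1

/-- Shape conditions of edges. -/
def Shape : C.Q → Option Alph → C.Q → Prop
  | Sum.inl (Sum.inl _), none, Sum.inr (Sum.inl (i, f, _)) =>
      (i : ℕ) = C.k - 1 ∧ f i ∈ (C.D i).accept
  | Sum.inr (Sum.inl (i, f, _)), some a, Sum.inr (Sum.inl (i', f', _)) =>
      i' = i ∧ (C.D i).step (f' i) a = f i
  | Sum.inr (Sum.inl (i, f, _)), none, Sum.inr (Sum.inl (i', f', _)) =>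
      (i : ℕ) = (i' : ℕ) + 1 ∧ f i = (C.D i).start ∧ f' i' ∈ (C.D i').accept
  | Sum.inr (Sum.inl (i, f, _)), none, Sum.inr (Sum.inr _) =>
      (i : ℕ) = 0 ∧ f i = (C.D i).start
  | Sum.inr (Sum.inr _), none, Sum.inl (Sum.inr _) => True
  | _, _, _ => False

def Elab (q : C.Q) (t : Option Alph) (q' : C.Q) : Prop :=
  C.Shape q t q' ∧ ∃ U : M2, IsGL U ∧
    C.scale q' • (U * C.ErepQ q') = C.ErepQ q * C.gmat q t q'

noncomputable def lbl (q : C.Q) (t : Option Alph) (q' : C.Q) : M2 :=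
  if h : ∃ U : M2, IsGL U ∧ C.scale q' • (U * C.ErepQ q') = C.ErepQ q * C.gmat q t q'
  then h.choose else 1

lemma lbl_spec {q : C.Q} {t : Option Alph} {q' : C.Q} (h : C.Elab q t q') :
    IsGL (C.lbl q t q') ∧
      C.scale q' • (C.lbl q t q' * C.ErepQ q') = C.ErepQ q * C.gmat q t q' := by
  rw [lbl, dif_pos h.2]
  exact h.2.choose_spec

lemma lbl_isGL : ∀ q t q', C.Elab q t q' → IsGL (C.lbl q t q') :=
  fun _ _ _ h => (C.lbl_spec h).1

lemma M2_inv_one : (1 : M2)⁻¹ = 1 := Matrix.inv_eq_left_inv (by simp)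

/-- The soundness invariant. -/
def Inv : C.Q → M2 → Prop
  | Sum.inl (Sum.inl _), P => P = 1
  | Sum.inl (Sum.inr _), P => ∃ ws : Fin C.k → List Alph,
      (∀ j, ws j ∈ (C.D j).accepts) ∧ C.c • P = C.BIG ws
  | Sum.inr (Sum.inl (i, f, r)), P => ∃ (ws : Fin C.k → List Alph) (s : List Alph),
      (∀ j, i < j → ws j ∈ (C.D j).accepts) ∧
      (C.D i).evalFrom (f i) s ∈ (C.D i).accept ∧
      P * C.Erep (C.cHat (i : ℕ)) r = C.TPP ws ((i : ℕ) + 1) * (C.M i).adjugate * (phi s)⁻¹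
  | Sum.inr (Sum.inr r), P => ∃ ws : Fin C.k → List Alph,
      (∀ j, ws j ∈ (C.D j).accepts) ∧ P * C.Erep (C.c * C.Mt.det) r = C.BIG ws

theorem sound {x : C.Q} {P : M2} (h : MPath C.Elab C.lbl qInit x P) : C.Inv x P := by
  induction h with
  | nil => rfl
  | @cons x P t x' hp he ih =>
    obtain ⟨hGL, spec2⟩ := C.lbl_spec he
    obtain ⟨hshape, -⟩ := he
    rcases x with ⟨u | u⟩ | ⟨⟨i, f, r⟩ | r⟩ <;> rcases x' with ⟨u' | u'⟩ | ⟨⟨i', f', r'⟩ | r'⟩ <;>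
      rcases t with _ | a <;>
      simp only [Shape] at hshape <;>
      simp only [ErepQ, gmat, scale, one_smul] at spec2 <;>
      simp only [Inv] at ih ⊢
    -- init → mid (t = none)
    · obtain ⟨hval, hacc⟩ := hshape
      refine ⟨fun _ => [], [], ?_, ?_, ?_⟩
      · intro j hj
        have hjk := j.isLt
        exact absurd (Fin.lt_def.1 hj) (by omega)
      · simpa [DFA.evalFrom_nil] using hacc
      · rw [ih, one_mul]
        rw [show ((i' : ℕ) + 1) = C.k by have := C.hk; omega, C.TPP_k]
        rw [one_mul, phi_nil, M2_inv_one, mul_one]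
        rw [one_mul] at spec2
        exact spec2
    -- mid → mid, phase change (t = none)
    · obtain ⟨hii', hstart, hacc⟩ := hshape
      obtain ⟨ws, s, hmem, heval, heq⟩ := ih
      refine ⟨Function.update ws i s, [], ?_, ?_, ?_⟩
      · intro j hj
        by_cases hji : j = i
        · subst hji
          rw [Function.update_self, DFA.mem_accepts]
          show (C.D j).evalFrom (C.D j).start s ∈ (C.D j).accept
          rwa [hstart] at heval
        · rw [Function.update_of_ne hji]
          apply hmem
          rw [Fin.lt_def] at hj ⊢
          have : (j : ℕ) ≠ (i : ℕ) := fun hc => hji (Fin.ext hc)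
          omega
      · simpa [DFA.evalFrom_nil] using hacc
      · have hik : (i : ℕ) < C.k := i.isLt
        have hstep : C.TPP (Function.update ws i s) ((i' : ℕ) + 1) =
            C.TPP (Function.update ws i s) ((i : ℕ) + 1) *
              ((C.M i).adjugate * (phi s)⁻¹) := by
          rw [← hii']
          have h2 := C.TPP_succ (Function.update ws i s) (i : ℕ) hik
          rw [Fin.eta] at h2
          rw [h2, Function.update_self]
        have hcongr : C.TPP (Function.update ws i s) ((i : ℕ) + 1) =
            C.TPP ws ((i : ℕ) + 1) := by
          apply TPP_congr
          intro j hj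
          rw [Function.update_of_ne]
          intro hc
          subst hc
          omega
        rw [hstep, hcongr]
        rw [Matrix.mul_assoc P, spec2, ← Matrix.mul_assoc, heq]
        rw [phi_nil, M2_inv_one, mul_one]
        simp [Matrix.mul_assoc]
    -- mid → mid, letter step (t = some a)
    · obtain ⟨hii', hstep⟩ := hshape
      subst hii'
      obtain ⟨ws, s, hmem, heval, heq⟩ := ih
      refine ⟨ws, a :: s, hmem, ?_, ?_⟩
      · show (C.D i').evalFrom ((C.D i').step (f' i') a) s ∈ (C.D i').accept
        rwa [hstep]
      · rw [Matrix.mul_assoc P, spec2, ← Matrix.mul_assoc, heq]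
        rw [phi_cons, Matrix.mul_inv_rev]
        simp [Matrix.mul_assoc]
    -- mid → done (t = none)
    · obtain ⟨hi0, hstart⟩ := hshape
      obtain ⟨ws, s, hmem, heval, heq⟩ := ih
      refine ⟨Function.update ws i s, ?_, ?_⟩
      · intro j
        by_cases hji : j = i
        · subst hji
          rw [Function.update_self, DFA.mem_accepts]
          show (C.D j).evalFrom (C.D j).start s ∈ (C.D j).accept
          rwa [hstart] at heval
        · rw [Function.update_of_ne hji]
          apply hmem
          rw [Fin.lt_def]
          have : (j : ℕ) ≠ (i : ℕ) := fun hc => hji (Fin.ext hc)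
          omega
      · have h0k : 0 < C.k := C.hk
        have hBIG : C.BIG (Function.update ws i s) =
            C.TPP ws ((i : ℕ) + 1) * ((C.M i).adjugate * (phi s)⁻¹) * C.Mt := by
          unfold BIG
          have h2 := C.TPP_succ (Function.update ws i s) 0 h0k
          have hfin : (⟨0, h0k⟩ : Fin C.k) = i := Fin.ext (by simpa using hi0.symm)
          rw [hfin] at h2
          rw [h2, Function.update_self]
          have hcongr : C.TPP (Function.update ws i s) (0 + 1) = C.TPP ws ((i : ℕ) + 1) := by
            rw [show (0 + 1 : ℕ) = (i : ℕ) + 1 by omega]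
            apply TPP_congr
            intro j hj
            rw [Function.update_of_ne]
            intro hc
            subst hc
            omega
          rw [hcongr]
        rw [hBIG]
        rw [Matrix.mul_assoc P, spec2, ← Matrix.mul_assoc, heq]
        simp [Matrix.mul_assoc]
    -- done → halt (t = none)
    · obtain ⟨ws, hmem, heq⟩ := ih
      refine ⟨ws, hmem, ?_⟩
      rw [mul_one, mul_one] at spec2
      rw [← Matrix.mul_smul, spec2, heq]

end Ctx

lemma pm_mul {a b x y : ℤ} (h1 : a = x ∨ a = -x) (h2 : b = y ∨ b = -y) :
    a * b = x * y ∨ a * b = -(x * y) := by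
  rcases h1 with rfl | rfl <;> rcases h2 with rfl | rfl
  · left; rfl
  · right; ring
  · right; ring
  · left; ring

lemma det_phi_inv' (w : List Alph) : (phi w)⁻¹.det = 1 ∨ (phi w)⁻¹.det = -1 := (isGL_phi w).inv

namespace Ctx

variable (C : Ctx)

lemma cHat_ge (n : ℕ) (h : C.k ≤ n) : C.cHat n = 1 := by
  unfold cHat
  rw [List.drop_eq_nil_of_le (by simpa using h)]
  rfl

lemma TPP_ge (ws : Fin C.k → List Alph) (n : ℕ) (h : C.k ≤ n) : C.TPP ws n = 1 := by
  unfold TPP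
  rw [List.drop_eq_nil_of_le (by simp [chunks, h])]
  rfl

lemma det_adj (i : Fin C.k) : (C.M i).adjugate.det = (C.M i).det := by
  rw [Matrix.det_adjugate]
  norm_num

lemma det_TPP (ws : Fin C.k → List Alph) (n : ℕ) :
    (C.TPP ws n).det = C.cHat n ∨ (C.TPP ws n).det = -C.cHat n := by
  suffices H : ∀ t n, C.k - n ≤ t →
      ((C.TPP ws n).det = C.cHat n ∨ (C.TPP ws n).det = -C.cHat n) from
    H C.k n (by omega)
  intro t
  induction t with
  | zero =>
    intro n hn
    rw [C.TPP_ge ws n (by omega), C.cHat_ge n (by omega)]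
    left; simp
  | succ t IH =>
    intro n hn
    by_cases h : n < C.k
    · rw [C.TPP_succ ws n h, C.cHat_succ n h]
      have h1 := IH (n + 1) (by omega)
      have h2 : ((C.M ⟨n, h⟩).adjugate * (phi (ws ⟨n, h⟩))⁻¹).det =
          (C.M ⟨n, h⟩).det ∨ ((C.M ⟨n, h⟩).adjugate * (phi (ws ⟨n, h⟩))⁻¹).det =
          -(C.M ⟨n, h⟩).det := by
        rw [Matrix.det_mul, C.det_adj]
        rcases det_phi_inv' (ws ⟨n, h⟩) with h3 | h3 <;> rw [h3]
        · left; ring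
        · right; ring
      rw [Matrix.det_mul]
      have := pm_mul h1 h2
      rcases this with h4 | h4 <;> rw [h4]
      · left; ring
      · right; ring
    · rw [C.TPP_ge ws n (by omega), C.cHat_ge n (by omega)]
      left; simp

/-- Semantic matrices during the run of phase `i`, having consumed suffix `s`. -/
noncomputable def Zmid (ws : Fin C.k → List Alph) (i : Fin C.k) (s : List Alph) : M2 :=
  C.TPP ws ((i : ℕ) + 1) * (C.M i).adjugate * (phi s)⁻¹

lemma det_Zmid (ws : Fin C.k → List Alph) (i : Fin C.k) (s : List Alph) :
    (C.Zmid ws i s).det = C.cHat (i : ℕ) ∨ (C.Zmid ws i s).det = -C.cHat (i : ℕ) := by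
  unfold Zmid
  rw [Matrix.det_mul, Matrix.det_mul, C.det_adj]
  have h1 := C.det_TPP ws ((i : ℕ) + 1)
  have h3 := det_phi_inv' s
  have hc : C.cHat (i : ℕ) = (C.M i).det * C.cHat ((i : ℕ) + 1) := by
    have := C.cHat_succ (i : ℕ) i.isLt
    rwa [Fin.eta] at this
  rcases h1 with h1 | h1 <;> rcases h3 with h3 | h3 <;> rw [h1, h3, hc]
  · left; ring
  · right; ring
  · right; ring
  · left; ring

lemma Zmid_nil (ws : Fin C.k → List Alph) (i : Fin C.k) :
    C.Zmid ws i [] = C.TPP ws ((i : ℕ) + 1) * (C.M i).adjugate := by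
  unfold Zmid
  rw [phi_nil, M2_inv_one, mul_one]

lemma Zmid_cons (ws : Fin C.k → List Alph) (i : Fin C.k) (a : Alph) (s : List Alph) :
    C.Zmid ws i (a :: s) = C.Zmid ws i s * (phiLetter a)⁻¹ := by
  unfold Zmid
  rw [phi_cons, Matrix.mul_inv_rev]
  simp [Matrix.mul_assoc]

lemma Zmid_top (ws : Fin C.k → List Alph) (i : Fin C.k) (hi : (i : ℕ) = C.k - 1) :
    C.Zmid ws i [] = (C.M i).adjugate := by
  rw [C.Zmid_nil, C.TPP_ge ws _ (by have := C.hk; omega), one_mul]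

lemma Zmid_phase (ws : Fin C.k → List Alph) (i i1 : Fin C.k) (h : (i1 : ℕ) = (i : ℕ) + 1) :
    C.Zmid ws i [] = C.Zmid ws i1 (ws i1) * (C.M i).adjugate := by
  rw [C.Zmid_nil]
  unfold Zmid
  rw [← h]
  have h2 := C.TPP_succ ws (i1 : ℕ) i1.isLt
  rw [Fin.eta] at h2
  rw [h2]
  simp [Matrix.mul_assoc]

lemma BIG_Zmid (ws : Fin C.k → List Alph) (i0 : Fin C.k) (h : (i0 : ℕ) = 0) :
    C.BIG ws = C.Zmid ws i0 (ws i0) * C.Mt := by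
  unfold BIG Zmid
  have h2 := C.TPP_succ ws 0 C.hk
  have hfin : (⟨0, C.hk⟩ : Fin C.k) = i0 := Fin.ext (by simpa using h.symm)
  rw [hfin] at h2
  rw [show (0:ℕ) + 1 = (i0 : ℕ) + 1 by omega] at h2
  rw [h2]
  simp [Matrix.mul_assoc]

lemma det_BIG (ws : Fin C.k → List Alph) :
    (C.BIG ws).det = C.c * C.Mt.det ∨ (C.BIG ws).det = -(C.c * C.Mt.det) := by
  unfold BIG
  rw [Matrix.det_mul]
  have h1 := C.det_TPP ws 0
  rcases h1 with h1 | h1 <;> rw [h1]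
  · left; rfl
  · right
    show -C.cHat 0 * C.Mt.det = -(C.cHat 0 * C.Mt.det)
    ring

/-- Gluing lemma: edges between faithful representatives exist. -/
lemma glue (d d' : ℤ) (hd'0 : d' ≠ 0) (hdm : d' ∣ (C.m : ℤ)) (Z g : M2)
    (hZ : Z.det = d ∨ Z.det = -d) (hZg : (Z * g).det = d' ∨ (Z * g).det = -d') :
    ∃ U, IsGL U ∧ U * C.Erep d' (C.red (Z * g)) = C.Erep d (C.red Z) * g := by
  obtain ⟨hEr, hEd⟩ := C.Erep_spec Z rfl hZ
  obtain ⟨hE'r, hE'd⟩ := C.Erep_spec (Z * g) rfl hZg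
  set E := C.Erep d (C.red Z) with hE
  set E' := C.Erep d' (C.red (Z * g)) with hE'
  have hEgd : (E * g).det = d' ∨ (E * g).det = -d' := by
    have hE2 : E.det = Z.det ∨ E.det = -Z.det := by
      rcases hEd with h | h <;> rcases hZ with h2 | h2 <;> rw [h, h2] <;> simp
    rw [Matrix.det_mul] at hZg ⊢
    rcases hE2 with h | h
    · rw [h]; exact hZg
    · rw [h, neg_mul]
      rcases hZg with h3 | h3
      · right; rw [h3]
      · left; rw [h3, neg_neg]
  have hredeq : E'.map (Int.cast : ℤ → ZMod C.m) = (E * g).map (Int.cast : ℤ → ZMod C.m) := by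
    have : C.red E' = C.red (E * g) := by
      rw [hE'r, C.red_mul, C.red_mul, hEr]
    simpa [red_eq_map] using this
  exact orbit_lemma C.m d' hd'0 hdm hE'd hEgd hredeq

/-- Extension of a path along an edge with scale 1. -/
lemma extend_edge (Z g : M2) (d d' : ℤ) {q q' : C.Q} {t : Option Alph}
    (hsh : C.Shape q t q') (hsc : C.scale q' = 1)
    (hd'0 : d' ≠ 0) (hdm : d' ∣ (C.m : ℤ))
    (hZ : Z.det = d ∨ Z.det = -d) (hZg : (Z * g).det = d' ∨ (Z * g).det = -d')
    (hEq : C.ErepQ q = C.Erep d (C.red Z)) (hEq' : C.ErepQ q' = C.Erep d' (C.red (Z * g)))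
    (hg : C.gmat q t q' = g)
    {P : M2} (hpath : MPath C.Elab C.lbl qInit q P) (hPE : P * C.ErepQ q = Z) :
    ∃ P', MPath C.Elab C.lbl qInit q' P' ∧ P' * C.ErepQ q' = Z * g := by
  obtain ⟨U, hU, hUeq⟩ := C.glue d d' hd'0 hdm Z g hZ hZg
  have hel : C.Elab q t q' :=
    ⟨hsh, U, hU, by rw [hsc, one_smul, hEq, hEq', hg]; exact hUeq⟩
  refine ⟨P * C.lbl q t q', MPath.cons hpath hel, ?_⟩
  have hspec := (C.lbl_spec hel).2
  rw [hsc, one_smul, hg] at hspec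
  rw [Matrix.mul_assoc, hspec, ← Matrix.mul_assoc, hPE]

end Ctx

namespace Ctx

variable (C : Ctx)

/-- DFA states attached to phase `i` after reading prefix `v`. -/
def fstate (i : Fin C.k) (v : List Alph) : ∀ j, C.σ j :=
  Function.update (fun j => (C.D j).start) i ((C.D i).evalFrom (C.D i).start v)

lemma fstate_self (i : Fin C.k) (v : List Alph) :
    C.fstate i v i = (C.D i).evalFrom (C.D i).start v := by
  unfold fstate
  rw [Function.update_self]

/-- Reachability of the intended mid states. -/
noncomputable def ReachP (ws : Fin C.k → List Alph) (i : Fin C.k) (v s : List Alph) : Prop :=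
  ∃ P, MPath C.Elab C.lbl qInit (qMid i (C.fstate i v) (C.red (C.Zmid ws i s))) P ∧
    P * C.ErepQ (qMid i (C.fstate i v) (C.red (C.Zmid ws i s))) = C.Zmid ws i s

set_option maxHeartbeats 1000000 in
theorem complete (ws : Fin C.k → List Alph) (hws : ∀ i, ws i ∈ (C.D i).accepts)
    {A : M2} (hA : IsGL A) (heqA : C.c • A = C.BIG ws) :
    MPath C.Elab C.lbl qInit qHalt A := by
  classical
  -- running within a phase
  have run : ∀ (i : Fin C.k), C.ReachP ws i (ws i) [] →
      ∀ (s v : List Alph), ws i = v ++ s → C.ReachP ws i v s := by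
    intro i hent s
    induction s with
    | nil =>
      intro v hv
      have hveq : v = ws i := by simpa using hv.symm
      rwa [hveq]
    | cons a s IH =>
      intro v hv
      have hv' : ws i = (v ++ [a]) ++ s := by simpa [List.append_assoc] using hv
      obtain ⟨P, hpath, hPE⟩ := IH (v ++ [a]) hv'
      have hsh : C.Shape (qMid i (C.fstate i (v ++ [a])) (C.red (C.Zmid ws i s))) (some a)
          (qMid i (C.fstate i v) (C.red (C.Zmid ws i (a :: s)))) := by
        refine ⟨rfl, ?_⟩
        show (C.D i).step (C.fstate i v i) a = C.fstate i (v ++ [a]) i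
        rw [C.fstate_self, C.fstate_self, DFA.evalFrom_append_singleton]
      have hext := C.extend_edge (C.Zmid ws i s) ((phiLetter a)⁻¹) (C.cHat (i : ℕ))
        (C.cHat (i : ℕ)) hsh rfl (C.cHat_ne (i : ℕ)) (C.cHat_dvd_m (i : ℕ))
        (C.det_Zmid ws i s)
        (by rw [← C.Zmid_cons]; exact C.det_Zmid ws i (a :: s))
        rfl
        (by rw [C.Zmid_cons]; rfl)
        rfl hpath hPE
      obtain ⟨P', hpath', hPE'⟩ := hext
      rw [← C.Zmid_cons ws i a s] at hPE'
      exact ⟨P', hpath', hPE'⟩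
  -- entering the topmost phase
  have hinit : ∀ (i : Fin C.k), (i : ℕ) = C.k - 1 → C.ReachP ws i (ws i) [] := by
    intro i hi
    have hzt := C.Zmid_top ws i hi
    have hdet := C.det_Zmid ws i []
    obtain ⟨hEr, hEd⟩ := C.Erep_spec (C.Zmid ws i []) rfl hdet
    obtain ⟨U, hU, hUeq⟩ := orbit_lemma C.m (C.cHat (i : ℕ)) (C.cHat_ne _) (C.cHat_dvd_m _)
      hEd hdet (by simpa [red_eq_map] using hEr)
    have hsh : C.Shape qInit none (qMid i (C.fstate i (ws i)) (C.red (C.Zmid ws i []))) := by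
      refine ⟨hi, ?_⟩
      rw [C.fstate_self]
      exact (DFA.mem_accepts (M := C.D i)).1 (hws i)
    have hel : C.Elab qInit none (qMid i (C.fstate i (ws i)) (C.red (C.Zmid ws i []))) := by
      refine ⟨hsh, U, hU, ?_⟩
      show (1 : ℤ) • (U * C.Erep (C.cHat (i : ℕ)) (C.red (C.Zmid ws i []))) =
        (1 : M2) * (C.M i).adjugate
      rw [one_smul, one_mul, hUeq, hzt]
    refine ⟨1 * C.lbl _ _ _, MPath.cons MPath.nil hel, ?_⟩
    have hspec := (C.lbl_spec hel).2
    have hspec' : C.lbl qInit none (qMid i (C.fstate i (ws i)) (C.red (C.Zmid ws i []))) *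
        C.Erep (C.cHat (i : ℕ)) (C.red (C.Zmid ws i [])) = (1 : M2) * (C.M i).adjugate := by
      have h9 : (1 : ℤ) • (C.lbl qInit none (qMid i (C.fstate i (ws i)) (C.red (C.Zmid ws i []))) *
          C.ErepQ (qMid i (C.fstate i (ws i)) (C.red (C.Zmid ws i [])))) =
          C.ErepQ qInit * C.gmat qInit none
            (qMid i (C.fstate i (ws i)) (C.red (C.Zmid ws i []))) := hspec
      rw [one_smul] at h9
      exact h9
    show (1 : M2) * C.lbl qInit none (qMid i (C.fstate i (ws i)) (C.red (C.Zmid ws i []))) *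
        C.Erep (C.cHat (i : ℕ)) (C.red (C.Zmid ws i [])) = C.Zmid ws i []
    rw [one_mul, hspec', one_mul, ← hzt]
  -- descending through the phases
  have hphase : ∀ (i i1 : Fin C.k), (i1 : ℕ) = (i : ℕ) + 1 →
      C.ReachP ws i1 [] (ws i1) → C.ReachP ws i (ws i) [] := by
    intro i i1 h hreach
    obtain ⟨P, hpath, hPE⟩ := hreach
    have hsh : C.Shape (qMid i1 (C.fstate i1 []) (C.red (C.Zmid ws i1 (ws i1)))) none
        (qMid i (C.fstate i (ws i)) (C.red (C.Zmid ws i []))) := by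
      refine ⟨h, ?_, ?_⟩
      · rw [C.fstate_self]
        rfl
      · rw [C.fstate_self]
        exact (DFA.mem_accepts (M := C.D i)).1 (hws i)
    have hext := C.extend_edge (C.Zmid ws i1 (ws i1)) ((C.M i).adjugate) (C.cHat (i1 : ℕ))
      (C.cHat (i : ℕ)) hsh rfl (C.cHat_ne (i : ℕ)) (C.cHat_dvd_m (i : ℕ))
      (C.det_Zmid ws i1 (ws i1))
      (by rw [← C.Zmid_phase ws i i1 h]; exact C.det_Zmid ws i [])
      rfl
      (by rw [C.Zmid_phase ws i i1 h]; rfl)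
      rfl hpath hPE
    obtain ⟨P', hpath', hPE'⟩ := hext
    rw [← C.Zmid_phase ws i i1 h] at hPE'
    exact ⟨P', hpath', hPE'⟩
  -- entry for every phase
  have hent : ∀ (t : ℕ) (i : Fin C.k), (i : ℕ) = C.k - 1 - t → C.ReachP ws i (ws i) [] := by
    intro t
    induction t with
    | zero => intro i hi; exact hinit i (by omega)
    | succ t IH =>
      intro i hi
      by_cases hc : C.k - 1 - t = C.k - 1 - (t + 1)
      · exact IH i (by omega)
      · have hlt : (i : ℕ) + 1 < C.k := by
          have h1 := i.isLt
          omega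
        have h1 : C.ReachP ws ⟨(i : ℕ) + 1, hlt⟩ (ws ⟨(i : ℕ) + 1, hlt⟩) [] := by
          apply IH
          show (i : ℕ) + 1 = C.k - 1 - t
          omega
        have h2 : C.ReachP ws ⟨(i : ℕ) + 1, hlt⟩ [] (ws ⟨(i : ℕ) + 1, hlt⟩) :=
          run ⟨(i : ℕ) + 1, hlt⟩ h1 (ws ⟨(i : ℕ) + 1, hlt⟩) [] (by simp)
        exact hphase i ⟨(i : ℕ) + 1, hlt⟩ rfl h2
  -- phase 0, fully consumed
  have h0 : C.ReachP ws ⟨0, C.hk⟩ [] (ws ⟨0, C.hk⟩) := by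
    apply run ⟨0, C.hk⟩ ?_ (ws ⟨0, C.hk⟩) [] (by simp)
    apply hent (C.k - 1)
    show (0 : ℕ) = C.k - 1 - (C.k - 1)
    omega
  obtain ⟨P, hpath, hPE⟩ := h0
  -- done edge
  have hsh : C.Shape (qMid ⟨0, C.hk⟩ (C.fstate ⟨0, C.hk⟩ [])
      (C.red (C.Zmid ws ⟨0, C.hk⟩ (ws ⟨0, C.hk⟩)))) none (qDone (C.red (C.BIG ws))) := by
    refine ⟨rfl, ?_⟩
    rw [C.fstate_self]
    rfl
  have hBZ := C.BIG_Zmid ws ⟨0, C.hk⟩ rfl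
  have hext := C.extend_edge (C.Zmid ws ⟨0, C.hk⟩ (ws ⟨0, C.hk⟩)) C.Mt (C.cHat 0)
    (C.c * C.Mt.det) hsh rfl C.cdMt_ne C.cdMt_dvd_m
    (C.det_Zmid ws ⟨0, C.hk⟩ (ws ⟨0, C.hk⟩))
    (by rw [← hBZ]; exact C.det_BIG ws)
    rfl
    (by rw [hBZ]; rfl)
    rfl hpath hPE
  obtain ⟨Pd, hpathd, hPEd⟩ := hext
  rw [← hBZ] at hPEd
  -- exit edge
  have hdetB := C.det_BIG ws
  obtain ⟨hEr, hEd⟩ := C.Erep_spec (C.BIG ws) rfl hdetB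
  obtain ⟨V, hV, hVeq⟩ := orbit_lemma C.m (C.c * C.Mt.det) C.cdMt_ne C.cdMt_dvd_m
    hdetB hEd (by simpa [red_eq_map] using hEr.symm)
  have hel : C.Elab (qDone (C.red (C.BIG ws))) none qHalt := by
    refine ⟨trivial, V * A, hV.mul hA, ?_⟩
    show C.c • (V * A * (1 : M2)) =
      C.Erep (C.c * C.Mt.det) (C.red (C.BIG ws)) * (1 : M2)
    rw [mul_one, mul_one, ← Matrix.mul_smul, heqA, hVeq]
  have hstep := MPath.cons hpathd hel
  have hspec := (C.lbl_spec hel).2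
  simp only [qHalt, qDone, qInit, qMid, ErepQ, gmat, scale, mul_one] at hspec hPEd
  have hfin : C.c • (Pd * C.lbl (qDone (C.red (C.BIG ws))) none qHalt) = C.c • A := by
    rw [← Matrix.mul_smul]
    simp only [qDone, qHalt]
    rw [hspec, hPEd, heqA]
  have := smul_cancel C.c_ne hfin
  rwa [this] at hstep

/-- The characterization of the solution equation via `BIG`. -/
lemma key_char (A : M2) (ws : Fin C.k → List Alph) :
    ((List.ofFn fun i => phi (ws i) * C.M i).prod * A = C.Mt) ↔ (C.c • A = C.BIG ws) := by
  have hl : ∀ p ∈ (List.ofFn fun i => (phi (ws i), C.M i)), IsGL p.1 ∧ p.2.det ≠ 0 := by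
    intro p hp
    rw [List.mem_ofFn] at hp
    obtain ⟨i, rfl⟩ := hp
    exact ⟨isGL_phi _, C.hM i⟩
  have hKA := key_alg (List.ofFn fun i => (phi (ws i), C.M i)) A C.Mt hl
  rw [List.map_ofFn, List.map_ofFn, List.map_ofFn] at hKA
  have h1 : ((fun p : M2 × M2 => p.1 * p.2) ∘ fun i => (phi (ws i), C.M i)) =
      fun i => phi (ws i) * C.M i := rfl
  have h2 : ((fun p : M2 × M2 => p.2.adjugate * p.1⁻¹) ∘ fun i => (phi (ws i), C.M i)) =
      fun i => (C.M i).adjugate * (phi (ws i))⁻¹ := rfl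
  have h3 : ((fun p : M2 × M2 => p.2.det) ∘ fun i => (phi (ws i), C.M i)) =
      fun i => (C.M i).det := rfl
  rw [h1, h2, h3] at hKA
  have hBIG : C.BIG ws = (List.ofFn fun i => (C.M i).adjugate * (phi (ws i))⁻¹).reverse.prod
      * C.Mt := by
    unfold BIG TPP chunks
    rw [List.drop_zero]
  have hc : C.c = (List.ofFn fun i => (C.M i).det).prod := by
    unfold c cHat
    rw [List.drop_zero]
  rw [hKA, hBIG, hc]
  exact eq_comm

/-- The master regularity theorem. -/
theorem master : RegularSubset {A : M2 | IsGL A ∧ ∃ ws : Fin C.k → List Alph,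
    (∀ i, ws i ∈ (C.D i).accepts) ∧
    (List.ofFn fun i => phi (ws i) * C.M i).prod * A = C.Mt} := by
  classical
  have hset : {A : M2 | IsGL A ∧ ∃ ws : Fin C.k → List Alph,
      (∀ i, ws i ∈ (C.D i).accepts) ∧
      (List.ofFn fun i => phi (ws i) * C.M i).prod * A = C.Mt} =
      {A : M2 | MPath C.Elab C.lbl qInit qHalt A} := by
    ext A
    simp only [Set.mem_setOf_eq]
    constructor
    · rintro ⟨hA, ws, hmem, heqn⟩
      exact C.complete ws hmem hA ((C.key_char A ws).1 heqn)
    · intro hp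
      have hGL : IsGL A := mpath_isGL C.lbl_isGL hp
      have hinv : ∃ ws : Fin C.k → List Alph,
          (∀ j, ws j ∈ (C.D j).accepts) ∧ C.c • A = C.BIG ws := C.sound hp
      obtain ⟨ws, hmem, heqn⟩ := hinv
      exact ⟨hGL, ws, hmem, (C.key_char A ws).2 heqn⟩
  rw [hset]
  exact mpath_regular C.Elab C.lbl C.lbl_isGL qInit qHalt

end Ctx

/-- General case: for `t = k + 1 ≥ 2`, nonsingular matrices `M₁, …, M_k, M_t` and regular
subsets `𝒮₁, …, 𝒮_k` of GL(2,ℤ), the set of `A ∈ GL(2,ℤ)` such that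
`A₁ M₁ A₂ M₂ ⋯ A_k M_k A = M_t` for some `Aᵢ ∈ 𝒮ᵢ` is a regular subset of GL(2,ℤ). -/
theorem solutions_regular_general (k : ℕ) (hk : 1 ≤ k) (M : Fin k → M2) (Mt : M2)
    (hM : ∀ i, (M i).det ≠ 0) (hMt : Mt.det ≠ 0)
    (S : Fin k → Set M2) (hS : ∀ i, RegularSubset (S i)) :
    RegularSubset {A : M2 | IsGL A ∧ ∃ As : Fin k → M2, (∀ i, As i ∈ S i) ∧
      (List.ofFn (fun i : Fin k => As i * M i)).prod * A = Mt} := by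
  classical
  choose L hLreg hLphi using hS
  choose σ ftσ D hD using hLreg
  let C : Ctx := ⟨k, hk, σ, ftσ, D, M, Mt, hM, hMt⟩
  have hmaster := C.master
  have hsets : {A : M2 | IsGL A ∧ ∃ As : Fin k → M2, (∀ i, As i ∈ S i) ∧
      (List.ofFn (fun i : Fin k => As i * M i)).prod * A = Mt} =
      {A : M2 | IsGL A ∧ ∃ ws : Fin k → List Alph, (∀ i, ws i ∈ (D i).accepts) ∧
      (List.ofFn fun i => phi (ws i) * M i).prod * A = Mt} := by
    ext A
    simp only [Set.mem_setOf_eq]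
    constructor
    · rintro ⟨hA, As, hmem, heqn⟩
      have hws : ∀ i, ∃ w, w ∈ L i ∧ phi w = As i := by
        intro i
        have h9 := hmem i
        rw [← hLphi i] at h9
        obtain ⟨w, hw, hww⟩ := h9
        exact ⟨w, hw, hww⟩
      choose ws hws1 hws2 using hws
      refine ⟨hA, ws, fun i => by rw [hD i]; exact hws1 i, ?_⟩
      rw [show (List.ofFn fun i => phi (ws i) * M i) =
          (List.ofFn fun i : Fin k => As i * M i) from by
        congr 1
        funext i
        rw [hws2 i]]
      exact heqn
    · rintro ⟨hA, ws, hmem, heqn⟩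
      refine ⟨hA, fun i => phi (ws i), fun i => ?_, heqn⟩
      rw [← hLphi i]
      exact ⟨ws i, by rw [← hD i]; exact hmem i, rfl⟩
  rw [hsets]
  exact hmaster
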